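/- arXiv:1711.03826 — 3 statements merged into one kernel-verified Lean document; each statement's English description precedes it below -/
import Mathlib

section
/- Let Q be a finite type, X : Q → ℕ, and k ∈ ℕ. For each function q⃗ : Fin k → Q and each q ∈ Q, let c_q(q⃗) denote the number of indices i ∈ Fin k with q⃗(i) = q. Then the sum over all q⃗ : Fin k → Q of the product over q ∈ Q of the descending factorial (X q)^{\underline{c_q(q⃗)}} equals the descending factorial (∑_{q ∈ Q} X q)^{\underline{k}}. -/
open Finset

/-- Single-state core of Proposition 2: summing over all type vectors `q⃗ : Fin k → Q`
the product over `q ∈ Q` of the descending factorials `(X q)^{\underline{c_q(q⃗)}}`,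
where `c_q(q⃗)` is the number of indices mapped to `q`, gives the descending factorial
`(∑ q, X q)^{\underline{k}}`. -/
theorem sum_prod_descFactorial_count {Q : Type*} [Fintype Q] [DecidableEq Q]
    (X : Q → ℕ) (k : ℕ) :
    ∑ qv : Fin k → Q, ∏ q : Q,
        (X q).descFactorial ((Finset.univ.filter (fun i => qv i = q)).card) =
      (∑ q : Q, X q).descFactorial k := by
  induction k with
  | zero => simp
  | succ k ih =>
    have key : ∀ qv : Fin k → Q, ∀ q0 : Q,
        (∏ q : Q, (X q).descFactorial
          ((Finset.univ.filter (fun i : Fin (k+1) => (Fin.cons q0 qv : Fin (k+1) → Q) i = q)).card)) =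
        (X q0 - (Finset.univ.filter (fun i => qv i = q0)).card) *
          ∏ q : Q, (X q).descFactorial ((Finset.univ.filter (fun i => qv i = q)).card) := by
      intro qv q0
      have hc : ∀ q : Q,
          (Finset.univ.filter (fun i : Fin (k+1) => (Fin.cons q0 qv : Fin (k+1) → Q) i = q)).card =
          (if q0 = q then 1 else 0) + (Finset.univ.filter (fun i => qv i = q)).card := by
        intro q
        rw [Finset.card_filter, Finset.card_filter, Fin.sum_univ_succ]
        simp [Fin.cons]
        rw [Finset.card_filter]
        congr
      rw [← Finset.mul_prod_erase Finset.univ _ (Finset.mem_univ q0)]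
      rw [← Finset.mul_prod_erase Finset.univ
        (fun q => (X q).descFactorial ((Finset.univ.filter (fun i => qv i = q)).card))
        (Finset.mem_univ q0), ← mul_assoc]
      congr 1
      · rw [hc q0, if_pos rfl, add_comm, Nat.descFactorial_succ]
      · apply Finset.prod_congr rfl
        intro q hq
        rw [hc q, if_neg (Finset.ne_of_mem_erase hq ∘ Eq.symm ∘ (by exact fun h => h)), zero_add]
    calc ∑ qv : Fin (k+1) → Q, ∏ q : Q,
            (X q).descFactorial ((Finset.univ.filter (fun i => qv i = q)).card)
        = ∑ p : Q × (Fin k → Q), ∏ q : Q,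
            (X q).descFactorial ((Finset.univ.filter
              (fun i : Fin (k+1) => (Fin.consEquiv fun _ => Q) p i = q)).card) := by
          rw [← Equiv.sum_comp (Fin.consEquiv fun _ : Fin (k+1) => Q)]
      _ = ∑ qv : Fin k → Q, ∑ q0 : Q,
            (X q0 - (Finset.univ.filter (fun i => qv i = q0)).card) *
            ∏ q : Q, (X q).descFactorial ((Finset.univ.filter (fun i => qv i = q)).card) := by
          rw [Fintype.sum_prod_type, Finset.sum_comm]
          refine Finset.sum_congr rfl fun qv _ => Finset.sum_congr rfl fun q0 _ => ?_
          rw [← key qv q0]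
          rfl
      _ = ∑ qv : Fin k → Q, (∑ q : Q, X q - k) *
            ∏ q : Q, (X q).descFactorial ((Finset.univ.filter (fun i => qv i = q)).card) := by
          refine Finset.sum_congr rfl fun qv _ => ?_
          have hsum : ∑ q : Q, (Finset.univ.filter (fun i => qv i = q)).card = k := by
            rw [← Finset.card_eq_sum_card_fiberwise (fun i _ => Finset.mem_univ (qv i)),
              Finset.card_univ, Fintype.card_fin]
          by_cases h : ∀ q : Q, (Finset.univ.filter (fun i => qv i = q)).card ≤ X q
          · rw [← Finset.sum_mul]
            congr 1
            rw [Finset.sum_tsub_distrib Finset.univ (fun q _ => h q), hsum]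
          · push_neg at h
            obtain ⟨q1, hq1⟩ := h
            have hz : ∏ q : Q, (X q).descFactorial
                ((Finset.univ.filter (fun i => qv i = q)).card) = 0 :=
              Finset.prod_eq_zero (Finset.mem_univ q1)
                (Nat.descFactorial_eq_zero_iff_lt.mpr hq1)
            rw [hz, mul_zero, Finset.sum_eq_zero fun _ _ => mul_zero _]
      _ = (∑ q : Q, X q).descFactorial (k + 1) := by
          rw [← Finset.mul_sum, ih, Nat.descFactorial_succ]
end

section
/- Let S and Q be finite types, k ∈ ℕ, s : Fin k → S a fixed assignment of a state to each tuple position, and X : S → Q → ℕ. For q⃗ : Fin k → Q and (s', q') ∈ S × Q, let c_{s',q'}(q⃗) be the number of indices i ∈ Fin k with s(i) = s' and q⃗(i) = q'; let κ_{s'} be the number of indices i with s(i) = s'; and let X̄(s') = ∑_{q ∈ Q} X s' q. Then ∑_{q⃗ : Fin k → Q} ∏_{(s',q') ∈ S × Q} (X s' q')^{\underline{c_{s',q'}(q⃗)}} = ∏_{s' ∈ S} (X̄(s'))^{\underline{κ_{s'}}}. -/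
open Finset

private lemma descFactorial_succ' (n m : ℕ) :
    n.descFactorial (m + 1) = n * (n - 1).descFactorial m := by
  cases n with
  | zero => simp
  | succ j => rw [Nat.succ_descFactorial_succ]; rfl

private lemma descFactorial_aux (n c : ℕ) :
    (n - c) * n.descFactorial c = n * (n - 1).descFactorial c := by
  rw [← Nat.descFactorial_succ, descFactorial_succ']

set_option maxHeartbeats 1600000

/-- Combinatorial identity behind Proposition 2: partitioning the ordered tuples of
distinct agents (one agent in state `s i` for each position `i`) according to the
vector `q⃗` of property-automaton states, and summing the counts over all `q⃗`,
recovers the total tuple count. -/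
theorem sum_prod_descFactorial_pair_count {S Q : Type*}
    [Fintype S] [Fintype Q] [DecidableEq S] [DecidableEq Q]
    (k : ℕ) (s : Fin k → S) (X : S → Q → ℕ) :
    ∑ qv : Fin k → Q, ∏ p : S × Q,
        (X p.1 p.2).descFactorial
          ((Finset.univ.filter (fun i => s i = p.1 ∧ qv i = p.2)).card) =
      ∏ s' : S, (∑ q : Q, X s' q).descFactorial
        ((Finset.univ.filter (fun i => s i = s')).card) := by
  induction k generalizing X with
  | zero => simp
  | succ k ih =>
    -- split off position 0
    have e1 : ∀ (F : (Fin (k+1) → Q) → ℕ),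
        ∑ qv : Fin (k+1) → Q, F qv
          = ∑ q0 : Q, ∑ qv : Fin k → Q, F (Fin.cons q0 qv) := by
      intro F
      rw [← ((Fin.consEquiv (fun _ : Fin (k+1) => Q)).sum_comp F), Fintype.sum_prod_type]
      rfl
    rw [e1]
    -- the count for `Fin.cons q0 qv` splits
    have cnt : ∀ (q0 : Q) (qv : Fin k → Q) (p : S × Q),
        ((univ : Finset (Fin (k+1))).filter
            (fun i => s i = p.1 ∧ (Fin.cons q0 qv : Fin (k+1) → Q) i = p.2)).card
          = ((univ : Finset (Fin k)).filter
              (fun i => s i.succ = p.1 ∧ qv i = p.2)).card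
            + (if p = (s 0, q0) then 1 else 0) := by
      intro q0 qv p
      rw [Finset.card_filter, Finset.card_filter, Fin.sum_univ_succ]
      simp only [Fin.cons_zero, Fin.cons_succ]
      rw [add_comm]
      congr 1
      by_cases h : p = (s 0, q0)
      · subst h; simp
      · rw [if_neg h, if_neg]
        intro ⟨h1, h2⟩
        exact h (by cases p; simp_all)
    -- pull out the factor for position 0
    have inner : ∀ (q0 : Q) (qv : Fin k → Q),
        ∏ p : S × Q, (X p.1 p.2).descFactorial
            (((univ : Finset (Fin k)).filter
                (fun i => s i.succ = p.1 ∧ qv i = p.2)).card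
              + (if p = (s 0, q0) then 1 else 0))
          = X (s 0) q0 *
            ∏ p : S × Q,
              (if p = ((s 0 : S), q0) then X p.1 p.2 - 1 else X p.1 p.2).descFactorial
                (((univ : Finset (Fin k)).filter
                    (fun i => s i.succ = p.1 ∧ qv i = p.2)).card) := by
      intro q0 qv
      have hpt : ∀ p : S × Q,
          (X p.1 p.2).descFactorial
              (((univ : Finset (Fin k)).filter
                  (fun i => s i.succ = p.1 ∧ qv i = p.2)).card
                + (if p = (s 0, q0) then 1 else 0))
            = (if p = (s 0, q0) then X (s 0) q0 else 1) *
              (if p = ((s 0 : S), q0) then X p.1 p.2 - 1 else X p.1 p.2).descFactorial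
                (((univ : Finset (Fin k)).filter
                    (fun i => s i.succ = p.1 ∧ qv i = p.2)).card) := by
        intro p
        by_cases h : p = (s 0, q0)
        · subst h
          simp only [if_pos rfl]
          simp [Nat.descFactorial_succ, descFactorial_aux]
        · simp [h]
      rw [Finset.prod_congr rfl (fun p _ => hpt p), Finset.prod_mul_distrib,
        Finset.prod_ite_eq' univ ((s 0 : S), q0) (fun _ => X (s 0) q0)]
      simp
    simp only [cnt]
    simp only [inner]
    -- apply the induction hypothesis (for each q0, with the decremented table)
    have ihq : ∀ q0 : Q,
        ∑ qv : Fin k → Q, ∏ p : S × Q,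
            (if p = ((s 0 : S), q0) then X p.1 p.2 - 1 else X p.1 p.2).descFactorial
              (((univ : Finset (Fin k)).filter
                  (fun i => s i.succ = p.1 ∧ qv i = p.2)).card)
          = ∏ s' : S,
              (∑ q : Q, if ((s' : S), q) = ((s 0 : S), q0) then X s' q - 1 else X s' q
                ).descFactorial
                (((univ : Finset (Fin k)).filter (fun i => s i.succ = s')).card) := by
      intro q0
      simpa using ih (fun i => s i.succ)
        (fun a b => if (a, b) = ((s 0 : S), q0) then X a b - 1 else X a b)
    simp only [← Finset.mul_sum, ihq]
    -- now a purely algebraic identity over `q0` and `s'`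
    have key : ∀ q0 : Q,
        X (s 0) q0 *
            ∏ s' : S,
              (∑ q : Q, if ((s' : S), q) = ((s 0 : S), q0) then X s' q - 1 else X s' q
                ).descFactorial
                (((univ : Finset (Fin k)).filter (fun i => s i.succ = s')).card)
          = X (s 0) q0 *
            ∏ s' : S,
              (if s' = s 0 then (∑ q : Q, X (s 0) q) - 1 else ∑ q : Q, X s' q
                ).descFactorial
                (((univ : Finset (Fin k)).filter (fun i => s i.succ = s')).card) := by
      intro q0
      by_cases h0 : X (s 0) q0 = 0
      · rw [h0, zero_mul, zero_mul]
      · congr 1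
        apply Finset.prod_congr rfl
        intro s' _
        congr 1
        by_cases hs : s' = s 0
        · rw [if_pos hs]
          have h1 : ∀ q : Q, (if ((s' : S), q) = ((s 0 : S), q0) then X s' q - 1 else X s' q)
              = if q = q0 then X s' q - 1 else X s' q := by
            intro q
            by_cases hq : q = q0 <;> simp [hq, hs, Prod.ext_iff]
          simp only [h1]
          rw [← Finset.add_sum_erase univ _ (Finset.mem_univ q0),
            ← Finset.add_sum_erase univ (fun q => X (s 0) q) (Finset.mem_univ q0)]
          rw [if_pos rfl]
          have h2 : ∑ q ∈ univ.erase q0, (if q = q0 then X s' q - 1 else X s' q)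
              = ∑ q ∈ univ.erase q0, X (s 0) q := by
            apply Finset.sum_congr rfl
            intro q hq
            rw [if_neg (Finset.mem_erase.mp hq).1, hs]
          rw [h2, hs]
          omega
        · rw [if_neg hs]
          apply Finset.sum_congr rfl
          intro q _
          rw [if_neg]
          intro he
          exact hs (congrArg Prod.fst he)
    simp only [key]
    rw [← Finset.sum_mul]
    -- right-hand side: split the count at position 0
    have cnt2 : ∀ s' : S,
        ((univ : Finset (Fin (k+1))).filter (fun i => s i = s')).card
          = ((univ : Finset (Fin k)).filter (fun i => s i.succ = s')).card
            + (if s' = s 0 then 1 else 0) := by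
      intro s'
      rw [Finset.card_filter, Finset.card_filter, Fin.sum_univ_succ, add_comm]
      congr 1
      by_cases h : s' = s 0
      · simp [h]
      · rw [if_neg h, if_neg (fun he => h he.symm)]
    simp only [cnt2]
    have final : ∀ s' : S,
        (∑ q : Q, X s' q).descFactorial
            (((univ : Finset (Fin k)).filter (fun i => s i.succ = s')).card
              + (if s' = s 0 then 1 else 0))
          = (if s' = s 0 then ∑ q : Q, X (s 0) q else 1) *
            (if s' = s 0 then (∑ q : Q, X (s 0) q) - 1 else ∑ q : Q, X s' q
              ).descFactorial
              (((univ : Finset (Fin k)).filter (fun i => s i.succ = s')).card) := by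
      intro s'
      by_cases h : s' = s 0
      · subst h
        simp only [if_pos rfl]
        simp [Nat.descFactorial_succ, descFactorial_aux]
      · simp [h]
    simp only [final]
    rw [Finset.prod_mul_distrib,
      Finset.prod_ite_eq' univ (s 0) (fun _ => ∑ q : Q, X (s 0) q)]
    simp
end

section
/- Let S and Q be finite types, k ∈ ℕ, s : Fin k → S, and X : S → Q → ℕ. For q⃗ : Fin k → Q and (s', q') ∈ S × Q, let c_{s',q'}(q⃗) be the number of indices i ∈ Fin k with s(i) = s' and q⃗(i) = q'; let κ_{s'} be the number of indices i with s(i) = s'; and let X̄(s') = ∑_{q ∈ Q} X s' q. Assume κ_{s'} ≤ X̄(s') for every s' ∈ S. Then, in the rational numbers, ∑_{q⃗ : Fin k → Q} ( ∏_{(s',q')} (X s' q')^{\underline{c_{s',q'}(q⃗)}} ) / ( ∏_{s'} (X̄(s'))^{\underline{κ_{s'}}} ) = 1. -/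
open Finset

lemma aux_fin {Q : Type*} [Fintype Q] [DecidableEq Q] (x : Q → ℕ) :
    ∀ n : ℕ, (∑ g : Fin n → Q, ∏ q : Q,
        (x q).descFactorial ((Finset.univ.filter fun i => g i = q).card))
      = (∑ q, x q).descFactorial n := by
  intro n
  induction n with
  | zero => simp
  | succ n ih =>
    rw [← Equiv.sum_comp (Fin.consEquiv fun _ => Q)]
    rw [Fintype.sum_prod_type]
    have hcount : ∀ (q0 : Q) (g : Fin n → Q) (q : Q),
        ((Finset.univ.filter fun i : Fin (n+1) => (Fin.consEquiv fun _ => Q) (q0, g) i = q).card)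
          = (if q0 = q then 1 else 0) + (Finset.univ.filter fun i : Fin n => g i = q).card := by
      intro q0 g q
      rw [Finset.card_filter, Finset.card_filter, Fin.sum_univ_succ]
      simp [Fin.consEquiv]
    have hprod : ∀ (q0 : Q) (g : Fin n → Q),
        (∏ q : Q, (x q).descFactorial
            ((if q0 = q then 1 else 0) + (Finset.univ.filter fun i : Fin n => g i = q).card))
          = (x q0 - (Finset.univ.filter fun i : Fin n => g i = q0).card) *
            ∏ q : Q, (x q).descFactorial ((Finset.univ.filter fun i : Fin n => g i = q).card) := by
      intro q0 g
      have he : (∏ q ∈ Finset.univ.erase q0, (x q).descFactorial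
            ((if q0 = q then 1 else 0) + (Finset.univ.filter fun i : Fin n => g i = q).card))
          = ∏ q ∈ Finset.univ.erase q0,
              (x q).descFactorial ((Finset.univ.filter fun i : Fin n => g i = q).card) :=
        Finset.prod_congr rfl fun q hq => by
          rw [if_neg (Ne.symm (Finset.ne_of_mem_erase hq)), zero_add]
      rw [← Finset.mul_prod_erase Finset.univ _ (Finset.mem_univ q0), he, if_pos rfl,
          add_comm 1, Nat.descFactorial_succ, mul_assoc]
      exact congrArg _ (Finset.mul_prod_erase Finset.univ
        (fun q => (x q).descFactorial ((Finset.univ.filter fun i : Fin n => g i = q).card))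
        (Finset.mem_univ q0))
    simp only [hcount, hprod]
    rw [Finset.sum_comm]
    have hinner : ∀ g : Fin n → Q,
        (∑ q0 : Q, (x q0 - (Finset.univ.filter fun i : Fin n => g i = q0).card) *
            ∏ q : Q, (x q).descFactorial ((Finset.univ.filter fun i : Fin n => g i = q).card))
          = ((∑ q, x q) - n) *
            ∏ q : Q, (x q).descFactorial ((Finset.univ.filter fun i : Fin n => g i = q).card) := by
      intro g
      rw [← Finset.sum_mul]
      by_cases hall : ∀ q : Q, (Finset.univ.filter fun i : Fin n => g i = q).card ≤ x q
      · have hsum : (∑ q : Q, (Finset.univ.filter fun i : Fin n => g i = q).card) = n := by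
          rw [← Finset.card_eq_sum_card_fiberwise (fun i _ => Finset.mem_univ (g i))]
          simp
        rw [Finset.sum_tsub_distrib _ (fun q _ => hall q), hsum]
      · push_neg at hall
        obtain ⟨q, hq⟩ := hall
        have h0 : (x q).descFactorial ((Finset.univ.filter fun i : Fin n => g i = q).card) = 0 :=
          Nat.descFactorial_eq_zero_iff_lt.2 hq
        rw [Finset.prod_eq_zero (Finset.mem_univ q) h0, mul_zero, mul_zero]
    simp only [hinner]
    rw [← Finset.mul_sum, ih, ← Nat.descFactorial_succ]

lemma aux_gen {ι Q : Type*} [Fintype ι] [DecidableEq ι] [Fintype Q] [DecidableEq Q] (x : Q → ℕ) :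
    (∑ g : ι → Q, ∏ q : Q,
        (x q).descFactorial ((Finset.univ.filter fun i => g i = q).card))
      = (∑ q, x q).descFactorial (Fintype.card ι) := by
  classical
  let e := Fintype.equivFin ι
  rw [← aux_fin x (Fintype.card ι)]
  refine Fintype.sum_equiv (e.arrowCongr (Equiv.refl Q)) _ _ fun g => ?_
  refine Finset.prod_congr rfl fun q _ => ?_
  congr 1
  exact Finset.card_equiv e (by simp [Equiv.arrowCongr])

/-- Proposition 2 of the paper: the fractions of the global rate assigned to the
synchronized transitions, indexed by the vectors `q⃗ : Fin k → Q`, sum to one,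
provided each multiplicity `κ_{s'}` does not exceed the aggregated count `X̄(s')`. -/
theorem sum_rate_fractions_eq_one {S Q : Type*}
    [Fintype S] [Fintype Q] [DecidableEq S] [DecidableEq Q]
    (k : ℕ) (s : Fin k → S) (X : S → Q → ℕ)
    (hκ : ∀ s' : S, (Finset.univ.filter (fun i => s i = s')).card ≤ ∑ q : Q, X s' q) :
    ∑ qv : Fin k → Q,
        ((∏ p : S × Q, ((X p.1 p.2).descFactorial
            ((Finset.univ.filter (fun i => s i = p.1 ∧ qv i = p.2)).card) : ℚ)) /
          (∏ s' : S, ((∑ q : Q, X s' q).descFactorial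
            ((Finset.univ.filter (fun i => s i = s')).card) : ℚ))) = 1 := by
  classical
  set D : ℚ := ∏ s' : S, ((∑ q : Q, X s' q).descFactorial
      ((Finset.univ.filter (fun i => s i = s')).card) : ℚ) with hD
  have hDpos : 0 < D := by
    refine Finset.prod_pos fun s' _ => ?_
    exact_mod_cast Nat.pos_of_ne_zero fun h =>
      absurd (Nat.descFactorial_eq_zero_iff_lt.1 h) (not_lt.2 (hκ s'))
  -- numerator identity over ℕ
  have key : (∑ qv : Fin k → Q, ∏ p : S × Q, (X p.1 p.2).descFactorial
        ((Finset.univ.filter (fun i => s i = p.1 ∧ qv i = p.2)).card))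
      = ∏ s' : S, (∑ q : Q, X s' q).descFactorial
        ((Finset.univ.filter (fun i => s i = s')).card) := by
    -- equivalence between global functions and families of fiberwise functions
    let E : (∀ s' : S, {i : Fin k // s i = s'} → Q) ≃ (Fin k → Q) :=
      { toFun := fun G i => G (s i) ⟨i, rfl⟩
        invFun := fun qv s' i => qv i.1
        left_inv := by
          intro G; funext s' i
          obtain ⟨i, hi⟩ := i
          subst hi; rfl
        right_inv := fun qv => rfl }
    rw [← Equiv.sum_comp E]
    have hcard : ∀ (G : ∀ s' : S, {i : Fin k // s i = s'} → Q) (s' : S) (q' : Q),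
        (Finset.univ.filter (fun i : Fin k => s i = s' ∧ E G i = q')).card
          = (Finset.univ.filter (fun i : {i : Fin k // s i = s'} => G s' i = q')).card := by
      intro G s' q'
      refine Finset.card_bij' (fun i hi => ⟨i, (Finset.mem_filter.1 hi).2.1⟩)
        (fun j _ => j.1) ?_ ?_ ?_ ?_
      · intro a ha
        obtain ⟨-, h1, h2⟩ := Finset.mem_filter.1 ha
        refine Finset.mem_filter.2 ⟨Finset.mem_univ _, ?_⟩
        subst h1; exact h2
      · intro j hj
        refine Finset.mem_filter.2 ⟨Finset.mem_univ _, j.2, ?_⟩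
        obtain ⟨j, hj'⟩ := j
        have := (Finset.mem_filter.1 hj).2
        subst hj'; exact this
      · intro a _; rfl
      · intro a _; rfl
    have step : ∀ G : ∀ s' : S, {i : Fin k // s i = s'} → Q,
        (∏ p : S × Q, (X p.1 p.2).descFactorial
          ((Finset.univ.filter (fun i : Fin k => s i = p.1 ∧ E G i = p.2)).card))
          = ∏ s' : S, ∏ q' : Q, (X s' q').descFactorial
            ((Finset.univ.filter (fun i : {i : Fin k // s i = s'} => G s' i = q')).card) := by
      intro G
      rw [Fintype.prod_prod_type]
      exact Finset.prod_congr rfl fun s' _ => Finset.prod_congr rfl fun q' _ => by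
        rw [hcard G s' q']
    simp only [step]
    rw [← Fintype.prod_sum (κ := fun s' : S => {i : Fin k // s i = s'} → Q)
      (f := fun s' g => ∏ q' : Q, (X s' q').descFactorial
        ((Finset.univ.filter fun i => g i = q').card))]
    refine Finset.prod_congr rfl fun s' _ => ?_
    rw [aux_gen (X s'), Fintype.card_subtype]
  rw [← Finset.sum_div, div_eq_one_iff_eq (ne_of_gt hDpos), hD]
  exact_mod_cast key
end
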